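/- Let φ belong to the space P̂ = P₃ ⊕ span{x³y − xy³} and suppose φ vanishes at the three Gauss points g₁ = (−√(3/5),−1), g₂ = (0,−1), g₃ = (√(3/5),−1) of the bottom edge of [−1,1]². Then for every bivariate polynomial q of degree at most 2 in each variable separately (q ∈ Q₂), one has ∫_{−1}^{1} φ(t,−1)·q(t,−1) dt = 0. -/

import Mathlib

open MvPolynomial

noncomputable def s : ℝ := Real.sqrt (3 / 5)

theorem eval_uni (φ : MvPolynomial (Fin 2) ℝ) (t c : ℝ) :
    Polynomial.eval t (MvPolynomial.aeval ![Polynomial.X, Polynomial.C c] φ) = eval ![t, c] φ := by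
  have h := MvPolynomial.comp_aeval (φ := Polynomial.aeval t) (f := ![Polynomial.X, Polynomial.C c])
  have h2 := congrArg (fun f => f φ) h
  simp only [AlgHom.comp_apply] at h2
  rw [show Polynomial.eval t (MvPolynomial.aeval ![Polynomial.X, Polynomial.C c] φ)
      = Polynomial.aeval t (MvPolynomial.aeval ![Polynomial.X, Polynomial.C c] φ) by
    simp [Polynomial.aeval_def]]
  rw [h2]
  rw [show (fun i => Polynomial.aeval t (![Polynomial.X, Polynomial.C c] i)) = ![t, c] from by
    funext i; fin_cases i <;> simp]
  simp [MvPolynomial.aeval_def]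

theorem natDegree_uni_le (p : MvPolynomial (Fin 2) ℝ) (c : ℝ) :
    (MvPolynomial.aeval ![Polynomial.X, Polynomial.C c] p : Polynomial ℝ).natDegree ≤ p.degreeOf 0 := by
  conv_lhs => rw [p.as_sum, map_sum]
  apply le_trans (Polynomial.natDegree_sum_le _ _)
  rw [Finset.fold_max_le]
  refine ⟨Nat.zero_le _, fun d hd => ?_⟩
  rw [Function.comp_apply, aeval_monomial]
  have hprod : (d.prod fun i k => (![Polynomial.X, Polynomial.C c] i) ^ k)
      = Polynomial.X ^ (d 0) * (Polynomial.C c) ^ (d 1) := by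
    rw [Finsupp.prod_fintype _ _ (fun i => pow_zero _)]
    simp [Fin.prod_univ_two]
  rw [hprod]
  apply le_trans (Polynomial.natDegree_mul_le)
  have h1 : (algebraMap ℝ (Polynomial ℝ) (coeff d p)).natDegree = 0 := Polynomial.natDegree_C _
  have h2 : (Polynomial.X ^ (d 0) * (Polynomial.C c) ^ (d 1) : Polynomial ℝ).natDegree ≤ d 0 := by
    apply le_trans (Polynomial.natDegree_mul_le)
    simp [Polynomial.natDegree_X_pow, Polynomial.natDegree_pow]
  have h3 : d 0 ≤ p.degreeOf 0 := by
    rw [MvPolynomial.degreeOf_eq_sup]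
    exact Finset.le_sup (f := fun m => m 0) hd
  omega

theorem key (P Q : Polynomial ℝ) (hP : P.natDegree ≤ 3) (hQ : Q.natDegree ≤ 2)
    (r1 : P.eval (-s) = 0) (r2 : P.eval (0:ℝ) = 0) (r3 : P.eval s = 0) :
    ∫ t in (-1:ℝ)..1, P.eval t * Q.eval t = 0 := by
  have hs2 : s ^ 2 = 3 / 5 := Real.sq_sqrt (by norm_num)
  have hs : (0:ℝ) < s := Real.sqrt_pos.2 (by norm_num)
  have hPe : ∀ t : ℝ, P.eval t = P.coeff 0 + P.coeff 1 * t + P.coeff 2 * t^2 + P.coeff 3 * t^3 := by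
    intro t
    rw [Polynomial.eval_eq_sum_range' (lt_of_le_of_lt hP (by norm_num : (3:ℕ) < 4))]
    simp [Finset.sum_range_succ]
  have hQe : ∀ t : ℝ, Q.eval t = Q.coeff 0 + Q.coeff 1 * t + Q.coeff 2 * t^2 := by
    intro t
    rw [Polynomial.eval_eq_sum_range' (lt_of_le_of_lt hQ (by norm_num : (2:ℕ) < 3))]
    simp [Finset.sum_range_succ]
  rw [hPe] at r1 r2 r3
  have hb0 : P.coeff 0 = 0 := by nlinarith
  have hb2 : P.coeff 2 = 0 := by nlinarith
  have hb1 : P.coeff 1 = -(3/5) * P.coeff 3 := by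
    have hsub : 2 * s * (P.coeff 1 + P.coeff 3 * s^2) = 0 := by nlinarith
    rcases mul_eq_zero.1 hsub with h | h
    · nlinarith
    · rw [hs2] at h; linarith
  have hexpand : ∀ t : ℝ, P.eval t * Q.eval t =
      (P.coeff 1 * Q.coeff 0) * t + (P.coeff 1 * Q.coeff 1) * t^2
      + (P.coeff 1 * Q.coeff 2 + P.coeff 3 * Q.coeff 0) * t^3
      + (P.coeff 3 * Q.coeff 1) * t^4 + (P.coeff 3 * Q.coeff 2) * t^5 := by
    intro t; rw [hPe, hQe, hb0, hb2]; ring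
  have hF : ∀ t : ℝ, HasDerivAt (fun x : ℝ =>
      (P.coeff 1 * Q.coeff 0)/2 * x^2 + (P.coeff 1 * Q.coeff 1)/3 * x^3
      + (P.coeff 1 * Q.coeff 2 + P.coeff 3 * Q.coeff 0)/4 * x^4
      + (P.coeff 3 * Q.coeff 1)/5 * x^5 + (P.coeff 3 * Q.coeff 2)/6 * x^6)
      ((P.coeff 1 * Q.coeff 0) * t + (P.coeff 1 * Q.coeff 1) * t^2
      + (P.coeff 1 * Q.coeff 2 + P.coeff 3 * Q.coeff 0) * t^3
      + (P.coeff 3 * Q.coeff 1) * t^4 + (P.coeff 3 * Q.coeff 2) * t^5) t := by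
    intro t
    have h := ((((((hasDerivAt_pow 2 t).const_mul ((P.coeff 1 * Q.coeff 0)/2)).add
      ((hasDerivAt_pow 3 t).const_mul ((P.coeff 1 * Q.coeff 1)/3))).add
      ((hasDerivAt_pow 4 t).const_mul ((P.coeff 1 * Q.coeff 2 + P.coeff 3 * Q.coeff 0)/4))).add
      ((hasDerivAt_pow 5 t).const_mul ((P.coeff 3 * Q.coeff 1)/5))).add
      ((hasDerivAt_pow 6 t).const_mul ((P.coeff 3 * Q.coeff 2)/6)))
    refine h.congr_deriv ?_
    push_cast; ring
  have hint : IntervalIntegrable (fun t : ℝ =>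
      (P.coeff 1 * Q.coeff 0) * t + (P.coeff 1 * Q.coeff 1) * t^2
      + (P.coeff 1 * Q.coeff 2 + P.coeff 3 * Q.coeff 0) * t^3
      + (P.coeff 3 * Q.coeff 1) * t^4 + (P.coeff 3 * Q.coeff 2) * t^5)
      MeasureTheory.volume (-1) 1 := by
    apply Continuous.intervalIntegrable; fun_prop
  simp only [hexpand]
  rw [intervalIntegral.integral_eq_sub_of_hasDerivAt (fun x _ => hF x) hint]
  norm_num
  linear_combination (2/3 * Q.coeff 1) * hb1

/-- Lemma 2.6 (patch-test orthogonality): if `φ ∈ P̂ = P₃ ⊕ span{x³y - xy³}` vanishes at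
the three Gauss points of the bottom edge of `[-1,1]²`, then for every `q ∈ Q₂` (degree
at most 2 in each variable separately) the edge integral `∫ φ q` vanishes. -/
theorem patch_test_orthogonality (φ q : MvPolynomial (Fin 2) ℝ)
    (hφ : ∃ (p : MvPolynomial (Fin 2) ℝ) (c : ℝ), p.totalDegree ≤ 3 ∧
      φ = p + C c * (X 0 ^ 3 * X 1 - X 0 * X 1 ^ 3))
    (h1 : eval ![-s, -1] φ = 0) (h2 : eval ![(0 : ℝ), -1] φ = 0) (h3 : eval ![s, -1] φ = 0)
    (hq0 : q.degreeOf 0 ≤ 2) (hq1 : q.degreeOf 1 ≤ 2) :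
    ∫ t in (-1 : ℝ)..1, (eval ![t, -1] φ) * (eval ![t, -1] q) = 0 := by
  obtain ⟨p, c, hpd, rfl⟩ := hφ
  set g : Fin 2 → Polynomial ℝ := ![Polynomial.X, Polynomial.C (-1)] with hg
  set P : Polynomial ℝ := MvPolynomial.aeval g (p + C c * (X 0 ^ 3 * X 1 - X 0 * X 1 ^ 3)) with hP
  set Q : Polynomial ℝ := MvPolynomial.aeval g q with hQ
  have hPdeg : P.natDegree ≤ 3 := by
    rw [hP, map_add]
    apply le_trans (Polynomial.natDegree_add_le _ _)
    refine max_le (le_trans (natDegree_uni_le p (-1))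
      (le_trans (MvPolynomial.degreeOf_le_totalDegree p 0) hpd)) ?_
    have heq : (MvPolynomial.aeval g (C c * (X 0 ^ 3 * X 1 - X 0 * X 1 ^ 3)) : Polynomial ℝ)
        = Polynomial.C c * (Polynomial.X - Polynomial.X ^ 3) := by
      rw [hg]
      simp only [map_mul, map_sub, map_pow, aeval_C, aeval_X, Matrix.cons_val_zero,
        Matrix.cons_val_one, Matrix.head_cons]
      rw [Polynomial.algebraMap_eq, show (Polynomial.C (-1):Polynomial ℝ) = -1 by simp]
      ring
    rw [heq]
    apply le_trans Polynomial.natDegree_mul_le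
    have hx : (Polynomial.X - Polynomial.X ^ 3 : Polynomial ℝ).natDegree ≤ 3 :=
      le_trans (Polynomial.natDegree_sub_le _ _) (by simp)
    simp only [Polynomial.natDegree_C, zero_add]
    exact hx
  have hQdeg : Q.natDegree ≤ 2 := le_trans (natDegree_uni_le q (-1)) hq0
  have e1 : P.eval (-s) = 0 := by rw [hP, hg, eval_uni]; exact h1
  have e2 : P.eval (0:ℝ) = 0 := by rw [hP, hg, eval_uni]; exact h2
  have e3 : P.eval s = 0 := by rw [hP, hg, eval_uni]; exact h3
  have := key P Q hPdeg hQdeg e1 e2 e3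
  rw [← this]
  apply intervalIntegral.integral_congr
  intro t _
  simp only [hP, hQ, hg]
  rw [eval_uni, eval_uni]
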